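/- Let A ⊂ ℝᵖ be a compact self-similar fractal fixed under M ≥ 2 similitudes ψ_1,…,ψ_M, all with the same contraction ratio r, with images ψ_m(A) pairwise metrically separated with separation σ > 0, and let d = log M / log(1/r) (so r^{−s} = M^{s/d}). Then for s > d and any N-point configuration ω_N ⊂ A, ℰ_s(A, MN) ≤ M^{1+s/d} E_s(ω_N) + σ^{−s} M² N². -/

import Mathlib

open Filter MeasureTheory Metric Real
open scoped BigOperators ENNReal NNReal Topology

open Classical in
noncomputable def rieszEnergy {E : Type*} [PseudoMetricSpace E] (s : ℝ) (ω : Finset E) : ℝ :=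
  ∑ x ∈ ω, ∑ y ∈ ω, if x ≠ y then dist x y ^ (-s) else 0

noncomputable def minRieszEnergy {E : Type*} [PseudoMetricSpace E] (s : ℝ) (A : Set E) (N : ℕ) : ℝ :=
  sInf {e : ℝ | ∃ ω : Finset E, ↑ω ⊆ A ∧ ω.card = N ∧ e = rieszEnergy s ω}

lemma rieszEnergy_nonneg {E : Type*} [PseudoMetricSpace E] (s : ℝ) (ω : Finset E) :
    0 ≤ rieszEnergy s ω := by
  unfold rieszEnergy
  refine Finset.sum_nonneg fun x _ => Finset.sum_nonneg fun y _ => ?_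
  split
  · exact Real.rpow_nonneg dist_nonneg _
  · exact le_refl 0

/-- one-step subdivision upper bound for the minimal energy. -/
theorem statement7 {p : ℕ} (s d r σ : ℝ) (M : ℕ) (hM : 2 ≤ M) (hr : 0 < r) (hr1 : r < 1)
    (hσ : 0 < σ) (A : Set (EuclideanSpace ℝ (Fin p))) (hA : IsCompact A)
    (ψ : Fin M → EuclideanSpace ℝ (Fin p) → EuclideanSpace ℝ (Fin p))
    (hψ : ∀ m x y, dist (ψ m x) (ψ m y) = r * dist x y)
    (hfix : A = ⋃ m, ψ m '' A)
    (hsep : ∀ i j, i ≠ j → ∀ x ∈ ψ i '' A, ∀ y ∈ ψ j '' A, σ ≤ dist x y)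
    (hd : d = Real.log M / Real.log (1 / r)) (hsd : d < s)
    (N : ℕ) (ω : Finset (EuclideanSpace ℝ (Fin p))) (hω : ↑ω ⊆ A) (hcard : ω.card = N) :
    minRieszEnergy s A (M * N) ≤
      (M : ℝ) ^ (1 + s / d) * rieszEnergy s ω + σ ^ (-s) * (M : ℝ) ^ 2 * (N : ℝ) ^ 2 := by
  classical
  have hM1 : (1 : ℝ) < M := by exact_mod_cast (by omega : 1 < M)
  have hlogr : Real.log r < 0 := Real.log_neg hr hr1
  have hlogM : 0 < Real.log M := Real.log_pos hM1
  have hdpos : 0 < d := by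
    rw [hd, one_div, Real.log_inv]
    exact div_pos hlogM (by linarith)
  have hspos : 0 < s := lt_trans hdpos hsd
  -- injectivity
  have hinj : ∀ m : Fin M, Function.Injective (ψ m) := by
    intro m x y h
    have h1 := hψ m x y
    rw [h, dist_self] at h1
    have h2 : dist x y = 0 := by nlinarith [dist_nonneg (x := x) (y := y)]
    exact dist_eq_zero.mp h2
  have hsub : ∀ m : Fin M, ψ m '' A ⊆ A := by
    intro m z hz
    have : z ∈ ⋃ m, ψ m '' A := Set.mem_iUnion.mpr ⟨m, hz⟩
    rwa [← hfix] at this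
  -- separation implies disjoint images
  have hdisj : ∀ i ∈ (Finset.univ : Finset (Fin M)), ∀ j ∈ Finset.univ, i ≠ j →
      Disjoint (ω.image (ψ i)) (ω.image (ψ j)) := by
    intro i _ j _ hij
    rw [Finset.disjoint_left]
    rintro z hzi hzj
    obtain ⟨x, hx, rfl⟩ := Finset.mem_image.mp hzi
    obtain ⟨y, hy, hyz⟩ := Finset.mem_image.mp hzj
    have h1 : σ ≤ dist (ψ i x) (ψ j y) :=
      hsep i j hij _ ⟨x, hω hx, rfl⟩ _ ⟨y, hω hy, rfl⟩
    rw [← hyz, dist_self] at h1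
    linarith
  set Ω : Finset (EuclideanSpace ℝ (Fin p)) :=
    Finset.univ.biUnion (fun m => ω.image (ψ m)) with hΩ
  have hΩsub : ↑Ω ⊆ A := by
    intro z hz
    simp only [hΩ, Finset.coe_biUnion, Set.mem_iUnion, Finset.mem_coe, Finset.mem_image] at hz
    obtain ⟨m, -, x, hx, rfl⟩ := hz
    exact hsub m ⟨x, hω hx, rfl⟩
  have hΩcard : Ω.card = M * N := by
    rw [hΩ, Finset.card_biUnion hdisj]
    simp [Finset.card_image_of_injective _ (hinj _), hcard]
  -- the double sum
  have hdecomp : rieszEnergy s Ω = ∑ i : Fin M, ∑ j : Fin M, ∑ x ∈ ω, ∑ y ∈ ω,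
      (if ψ i x ≠ ψ j y then dist (ψ i x) (ψ j y) ^ (-s) else 0) := by
    unfold rieszEnergy
    rw [hΩ, Finset.sum_biUnion hdisj]
    refine Finset.sum_congr rfl fun i _ => ?_
    rw [Finset.sum_image (fun x _ y _ h => hinj i h)]
    have hx : ∀ x ∈ ω, (∑ y ∈ Ω, if ψ i x ≠ y then dist (ψ i x) y ^ (-s) else 0)
        = ∑ j : Fin M, ∑ y ∈ ω, if ψ i x ≠ ψ j y then dist (ψ i x) (ψ j y) ^ (-s) else 0 := by
      intro x _
      rw [hΩ, Finset.sum_biUnion hdisj]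
      exact Finset.sum_congr rfl fun j _ => Finset.sum_image (fun a _ b _ h => hinj j h)
    rw [← hΩ]
    refine (Finset.sum_congr rfl fun x hx' => ?_).trans (Finset.sum_comm (f := fun x j => ∑ y ∈ ω, if ψ i x ≠ ψ j y then dist (ψ i x) (ψ j y) ^ (-s) else 0))
    convert hx x hx'
  -- value of diagonal blocks
  have hdiag : ∀ i : Fin M, (∑ x ∈ ω, ∑ y ∈ ω,
      (if ψ i x ≠ ψ i y then dist (ψ i x) (ψ i y) ^ (-s) else 0))
      = r ^ (-s) * rieszEnergy s ω := by
    intro i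
    unfold rieszEnergy
    rw [Finset.mul_sum]
    refine Finset.sum_congr rfl fun x _ => ?_
    rw [Finset.mul_sum]
    refine Finset.sum_congr rfl fun y _ => ?_
    rw [hψ, Real.mul_rpow hr.le dist_nonneg]
    simp only [ne_eq, (hinj i).eq_iff]
    by_cases h : x = y
    · simp [h]
    · rw [if_pos h, if_pos h]
  -- off-diagonal blocks
  have hoff : ∀ i j : Fin M, i ≠ j → (∑ x ∈ ω, ∑ y ∈ ω,
      (if ψ i x ≠ ψ j y then dist (ψ i x) (ψ j y) ^ (-s) else 0))
      ≤ σ ^ (-s) * (N : ℝ) ^ 2 := by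
    intro i j hij
    have hterm : ∀ x ∈ ω, ∀ y ∈ ω,
        (if ψ i x ≠ ψ j y then dist (ψ i x) (ψ j y) ^ (-s) else 0) ≤ σ ^ (-s) := by
      intro x hx y hy
      have hσd : σ ≤ dist (ψ i x) (ψ j y) :=
        hsep i j hij _ ⟨x, hω hx, rfl⟩ _ ⟨y, hω hy, rfl⟩
      have hb : dist (ψ i x) (ψ j y) ^ (-s) ≤ σ ^ (-s) :=
        Real.rpow_le_rpow_of_nonpos hσ hσd (by linarith)
      split
      · exact hb
      · positivity
    calc (∑ x ∈ ω, ∑ y ∈ ω, (if ψ i x ≠ ψ j y then dist (ψ i x) (ψ j y) ^ (-s) else 0))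
        ≤ ∑ _x ∈ ω, ∑ _y ∈ ω, σ ^ (-s) :=
          Finset.sum_le_sum fun x hx => Finset.sum_le_sum (hterm x hx)
      _ = σ ^ (-s) * (N : ℝ) ^ 2 := by
          simp [Finset.sum_const, hcard]; ring
  -- combine
  have ha : 0 ≤ r ^ (-s) * rieszEnergy s ω :=
    mul_nonneg (Real.rpow_nonneg hr.le _) (rieszEnergy_nonneg s ω)
  have hb0 : (0:ℝ) ≤ σ ^ (-s) * (N : ℝ) ^ 2 := by positivity
  have hbound : rieszEnergy s Ω ≤
      (M : ℝ) * (r ^ (-s) * rieszEnergy s ω) + (M : ℝ) ^ 2 * (σ ^ (-s) * (N : ℝ) ^ 2) := by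
    rw [hdecomp]
    have hstep : ∀ i : Fin M, ∀ j : Fin M, (∑ x ∈ ω, ∑ y ∈ ω,
        (if ψ i x ≠ ψ j y then dist (ψ i x) (ψ j y) ^ (-s) else 0))
        ≤ (if i = j then r ^ (-s) * rieszEnergy s ω else 0) + σ ^ (-s) * (N : ℝ) ^ 2 := by
      intro i j
      by_cases h : i = j
      · subst h
        rw [if_pos rfl, hdiag i]
        linarith
      · rw [if_neg h]
        linarith [hoff i j h]
    calc (∑ i : Fin M, ∑ j : Fin M, ∑ x ∈ ω, ∑ y ∈ ω,
          (if ψ i x ≠ ψ j y then dist (ψ i x) (ψ j y) ^ (-s) else 0))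
        ≤ ∑ i : Fin M, ∑ j : Fin M,
            ((if i = j then r ^ (-s) * rieszEnergy s ω else 0) + σ ^ (-s) * (N : ℝ) ^ 2) :=
          Finset.sum_le_sum fun i _ => Finset.sum_le_sum fun j _ => hstep i j
      _ = (M : ℝ) * (r ^ (-s) * rieszEnergy s ω) + (M : ℝ) ^ 2 * (σ ^ (-s) * (N : ℝ) ^ 2) := by
          simp [Finset.sum_add_distrib, Finset.sum_ite_eq, Finset.card_univ]
          ring
  -- minimal energy is at most the energy of Ω
  have hmin : minRieszEnergy s A (M * N) ≤ rieszEnergy s Ω := by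
    apply csInf_le
    · exact ⟨0, by rintro e ⟨w, -, -, rfl⟩; exact rieszEnergy_nonneg s w⟩
    · exact ⟨Ω, hΩsub, hΩcard, rfl⟩
  -- identify M^{s/d} with r^{-s}
  have hMs : (M : ℝ) ^ (s / d) = r ^ (-s) := by
    rw [Real.rpow_def_of_pos (by linarith : (0:ℝ) < (M:ℝ)), Real.rpow_def_of_pos hr]
    congr 1
    rw [hd, one_div, Real.log_inv]
    field_simp
  have hM1s : (M : ℝ) ^ (1 + s / d) = (M : ℝ) * r ^ (-s) := by
    rw [Real.rpow_add (by linarith : (0:ℝ) < (M:ℝ)), Real.rpow_one, hMs]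
  calc minRieszEnergy s A (M * N) ≤ rieszEnergy s Ω := hmin
    _ ≤ (M : ℝ) * (r ^ (-s) * rieszEnergy s ω) + (M : ℝ) ^ 2 * (σ ^ (-s) * (N : ℝ) ^ 2) := hbound
    _ = (M : ℝ) ^ (1 + s / d) * rieszEnergy s ω + σ ^ (-s) * (M : ℝ) ^ 2 * (N : ℝ) ^ 2 := by
        rw [hM1s]; ring
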